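/- Let C ≥ 1 be an integer and let Ω : T(F) → ℂ^× be a group homomorphism with conductor exponent c(Ω) = C (i.e., Ω is trivial on U_C and, if C ≥ 1, nontrivial on U_{C−1}) and with Ω(u·1) = 1 for all u ∈ o^×. For an integer k with 0 < k ≤ C, the value Ω(t(1, y)) depends only on the class of y modulo p^C for y ∈ o with v(y) = k, and the sum S_k := ∑ Ω(t(1, y))^{−1}, taken over y in any set of representatives of the classes { y ∈ o/p^C : v(y) = k }, satisfies: S_k = 0 if 0 < k < C − 1; S_{C−1} = −1 if C > 1; and S_C = 1. -/

import Mathlib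

open Matrix

noncomputable section

abbrev Zm0 : Type := WithZero (Multiplicative ℤ)

/-- `ev n` is the value (in `ℤₘ₀ = WithZero (Multiplicative ℤ)`) of an element of additive
valuation `n`; thus `x ∈ 𝔭^n` iff `v x ≤ ev n`, `x ∈ 𝔬` iff `v x ≤ ev 0`, and `x ∈ 𝔬^×` iff
`v x = ev 0`. -/
def ev (n : ℤ) : Zm0 := ((Multiplicative.ofAdd (-n) : Multiplicative ℤ) : Zm0)

variable {F : Type*} [Field F]

/-- the matrix t(x,y) = [[x, cy],[−ay, x−by]] -/
def tmat (a b c x y : F) : Matrix (Fin 2) (Fin 2) F :=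
  !![x, c * y; -(a * y), x - b * y]

/-- the torus T(F) ⊆ GL₂(F), as a set of matrices -/
def TSet (a b c : F) : Set (Matrix (Fin 2) (Fin 2) F) :=
  {m | ∃ x y : F, x ^ 2 - b * x * y + a * c * y ^ 2 ≠ 0 ∧ m = tmat a b c x y}

def wmat (F : Type*) [Field F] : Matrix (Fin 2) (Fin 2) F := !![0, 1; -1, 0]

/-- GL₂(𝔬) : integral entries and unit determinant -/
def GL2O (v : Valuation F Zm0) : Set (Matrix (Fin 2) (Fin 2) F) :=
  {g | (∀ i j, v (g i j) ≤ ev 0) ∧ v g.det = ev 0}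

/-- the Iwahori subgroup I = { g ∈ GL₂(𝔬) : g₂₁ ∈ 𝔭 } -/
def Iwahori (v : Valuation F Zm0) : Set (Matrix (Fin 2) (Fin 2) F) :=
  {g | g ∈ GL2O v ∧ v (g 1 0) ≤ ev 1}

/-- membership in U_m ⊆ T(F): U_0 = T(F) ∩ GL₂(𝔬), and for m ≥ 1,
U_m = { t ∈ T(F) : t − 1 ∈ ϖ^m·M₂(𝔬) } -/
def Umem (v : Valuation F Zm0) (a b c : F) (m : ℕ) (t : Matrix (Fin 2) (Fin 2) F) : Prop :=
  t ∈ TSet a b c ∧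
    (if m = 0 then (∀ i j, v (t i j) ≤ ev 0) ∧ v t.det = ev 0
     else ∀ i j, v ((t - 1) i j) ≤ ev m)

namespace S17

lemma ev_zero : ev 0 = 1 := by simp [ev]

lemma ev_mul (m n : ℤ) : ev m * ev n = ev (m + n) := by
  rw [ev, ev, ev, ← WithZero.coe_mul, ← ofAdd_add, neg_add]

lemma ev_le_ev {m n : ℤ} : ev m ≤ ev n ↔ n ≤ m := by
  rw [ev, ev, WithZero.coe_le_coe, Multiplicative.ofAdd_le, neg_le_neg_iff]

lemma ev_lt_ev {m n : ℤ} : ev m < ev n ↔ n < m := by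
  rw [ev, ev, WithZero.coe_lt_coe, Multiplicative.ofAdd_lt, neg_lt_neg_iff]

lemma ev_ne_zero (n : ℤ) : ev n ≠ 0 := WithZero.coe_ne_zero

lemma zm0_discrete {x : Zm0} {n : ℤ} (h : x ≤ ev n) (hne : x ≠ ev n) : x ≤ ev (n + 1) := by
  rcases eq_or_ne x 0 with h0 | h0
  · simp [h0]
  · obtain ⟨u, rfl⟩ := WithZero.ne_zero_iff_exists.mp h0
    rw [ev, WithZero.coe_le_coe] at h ⊢
    have h' : Multiplicative.toAdd u ≤ -n := Multiplicative.ofAdd_le.mp h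
    have hne' : Multiplicative.toAdd u ≠ -n := by
      intro he
      exact hne (by rw [ev, ← he]; rfl)
    have h2 : Multiplicative.toAdd u ≤ -(n + 1) := by omega
    exact Multiplicative.ofAdd_le.mpr h2

variable (v : Valuation F Zm0)

lemma v_add_eq_left {x w : F} (h : v w < v x) : v (x + w) = v x := by
  rw [v.map_add_of_distinct_val (ne_of_gt h), max_eq_left h.le]

lemma v_one_eq : v (1 : F) = ev 0 := by rw [v.map_one, ev_zero]

lemma v_one_add {w : F} (h : v w ≤ ev 1) : v (1 + w) = ev 0 := by
  rw [← v_one_eq v]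
  exact v_add_eq_left v (lt_of_le_of_lt h (by rw [v_one_eq v]; exact ev_lt_ev.mpr one_pos))

lemma vmul_le {x y : F} {m n : ℤ} (hx : v x ≤ ev m) (hy : v y ≤ ev n) :
    v (x * y) ≤ ev (m + n) := by
  rw [v.map_mul, ← ev_mul]
  exact mul_le_mul' hx hy

lemma vmul_le' (v : Valuation F Zm0) {x y : F} {m n p : ℤ} (hx : v x ≤ ev m) (hy : v y ≤ ev n)
    (h : p ≤ m + n) : v (x * y) ≤ ev p :=
  le_trans (vmul_le v hx hy) (ev_le_ev.mpr h)

lemma v_div_unit {x y : F} (hy : v y = ev 0) : v (x / y) = v x := by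
  rw [map_div₀, hy, ev_zero, div_one]


section Mats

variable (a b c : F)

lemma tmul (x y x' y' : F) :
    tmat a b c x y * tmat a b c x' y' =
      tmat a b c (x * x' - a * c * (y * y')) (x * y' + x' * y - b * (y * y')) := by
  ext i j
  fin_cases i <;> fin_cases j <;>
    simp [tmat, Matrix.mul_apply, Fin.sum_univ_two] <;> ring

lemma tdet (x y : F) : (tmat a b c x y).det = x ^ 2 - b * x * y + a * c * y ^ 2 := by
  simp [tmat, Matrix.det_fin_two_of]; ring

lemma tsmul (u x y : F) : u • tmat a b c x y = tmat a b c (u * x) (u * y) := by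
  ext i j
  fin_cases i <;> fin_cases j <;> simp [tmat] <;> ring

lemma tscalar (u : F) : tmat a b c u 0 = u • (1 : Matrix (Fin 2) (Fin 2) F) := by
  ext i j
  fin_cases i <;> fin_cases j <;> simp [tmat, Matrix.one_apply]

lemma tsub_one (x y : F) :
    tmat a b c x y - 1 = !![x - 1, c * y; -(a * y), x - 1 - b * y] := by
  ext i j
  fin_cases i <;> fin_cases j <;> simp [tmat, Matrix.one_apply] <;> ring

lemma mem_TSet {x y : F} (h : x ^ 2 - b * x * y + a * c * y ^ 2 ≠ 0) :
    tmat a b c x y ∈ TSet a b c := ⟨x, y, h, rfl⟩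

lemma smul_one_mul (u : F) (m : Matrix (Fin 2) (Fin 2) F) :
    (u • (1 : Matrix (Fin 2) (Fin 2) F)) * m = u • m := by
  rw [smul_mul_assoc, one_mul]

end Mats


section Main

variable {v : Valuation F Zm0} {a b c : F} {Ω : Matrix (Fin 2) (Fin 2) F → ℂ} {C : ℕ}

lemma v_add_le {x y : F} {g : Zm0} (hx : v x ≤ g) (hy : v y ≤ g) : v (x + y) ≤ g :=
  le_trans (v.map_add x y) (max_le hx hy)

lemma v_sub_le {x y : F} {g : Zm0} (hx : v x ≤ g) (hy : v y ≤ g) : v (x - y) ≤ g :=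
  le_trans (v.map_sub x y) (max_le hx hy)

lemma v_ne_zero {x : F} {n : ℤ} (h : v x = ev n) : x ≠ 0 := by
  intro h0
  rw [h0, v.map_zero] at h
  exact ev_ne_zero n h.symm

section ABC

variable (hao : v a ≤ ev 0) (hbo : v b ≤ ev 0) (hc : v c = ev 0)

include hao hc in
lemma v_ac_mul_le {y z : F} (hy : v y ≤ ev 1) (hz : v z ≤ ev 1) :
    v (a * c * (y * z)) ≤ ev 1 := by
  exact vmul_le' v (vmul_le' v hao hc.le (le_refl 0)) (vmul_le' v hy hz (le_refl 2))
    (by norm_num)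

include hbo in
lemma v_b_mul_le {y : F} (hy : v y ≤ ev 1) : v (b * y) ≤ ev 1 :=
  vmul_le' v hbo hy (by norm_num)

include hao hbo hc in
lemma v_det_one {y : F} (hy : v y ≤ ev 1) : v (1 - b * y + a * c * y ^ 2) = ev 0 := by
  have e : 1 - b * y + a * c * y ^ 2 = 1 + (-(b * y) + a * c * (y * y)) := by ring
  rw [e]
  apply v_one_add
  apply v_add_le
  · rw [v.map_neg]; exact v_b_mul_le hbo hy
  · exact v_ac_mul_le hao hc hy hy

include hao hbo hc in
lemma det_form_ne {y : F} (hy : v y ≤ ev 1) :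
    (1 : F) ^ 2 - b * 1 * y + a * c * y ^ 2 ≠ 0 := by
  have e : (1 : F) ^ 2 - b * 1 * y + a * c * y ^ 2 = 1 - b * y + a * c * y ^ 2 := by ring
  rw [e]
  exact v_ne_zero (v_det_one hao hbo hc hy)

include hao hbo hc in
lemma t1_mem {y : F} (hy : v y ≤ ev 1) : tmat a b c 1 y ∈ TSet a b c :=
  mem_TSet a b c (det_form_ne hao hbo hc hy)

end ABC

section OmegaLemmas

variable (hao : v a ≤ ev 0) (hbo : v b ≤ ev 0) (hc : v c = ev 0)
variable (hΩmul : ∀ s t, s ∈ TSet a b c → t ∈ TSet a b c → Ω (s * t) = Ω s * Ω t)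
variable (hΩne : ∀ t ∈ TSet a b c, Ω t ≠ 0)
variable (hcond : ∀ t, Umem v a b c C t → Ω t = 1)
variable (hunit : ∀ u : F, v u = ev 0 → Ω (u • (1 : Matrix (Fin 2) (Fin 2) F)) = 1)
variable (hC : 1 ≤ C)

include hao hbo hc hcond hC in
lemma omega_Uc {y : F} (hy : v y ≤ ev (C : ℤ)) : Ω (tmat a b c 1 y) = 1 := by
  have hy1 : v y ≤ ev 1 := hy.trans (ev_le_ev.mpr (by exact_mod_cast hC))
  apply hcond
  refine ⟨t1_mem hao hbo hc hy1, ?_⟩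
  rw [if_neg (by omega)]
  intro i j
  rw [tsub_one]
  fin_cases i <;> fin_cases j <;>
    simp only [Fin.mk_zero, Fin.mk_one, Fin.isValue, Matrix.of_apply, Matrix.cons_val',
      Matrix.cons_val_zero, Matrix.empty_val', Matrix.cons_val_fin_one, Matrix.cons_val_one,
      Matrix.head_cons, Matrix.head_fin_const]
  · simpa using zero_le'
  · exact vmul_le' v hc.le hy (by omega)
  · rw [v.map_neg]; exact vmul_le' v hao hy (by omega)
  · have e : (1 : F) - 1 - b * y = -(b * y) := by ring
    rw [e, v.map_neg]; exact vmul_le' v hbo hy (by omega)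

include hao hbo hc hΩmul hunit in
lemma omega_scalar_mul {u w : F} (hu : v u = ev 0) (hw : v w ≤ ev 1) :
    Ω (tmat a b c u (u * w)) = Ω (tmat a b c 1 w) := by
  have hu0 : u ≠ 0 := v_ne_zero hu
  have hu2 : u ^ 2 - b * u * 0 + a * c * 0 ^ 2 ≠ 0 := by
    simpa using pow_ne_zero 2 hu0
  have e : tmat a b c u (u * w) = tmat a b c u 0 * tmat a b c 1 w := by
    rw [tmul]; congr 1 <;> ring
  rw [e, hΩmul _ _ (mem_TSet a b c hu2) (t1_mem hao hbo hc hw), tscalar, hunit u hu, one_mul]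

include hao hbo hc hΩmul hunit in
lemma phi_mul {y z : F} (hy : v y ≤ ev 1) (hz : v z ≤ ev 1) :
    Ω (tmat a b c 1 y) * Ω (tmat a b c 1 z) =
      Ω (tmat a b c 1 ((y + z - b * (y * z)) / (1 - a * c * (y * z)))) := by
  have hNv : v (1 - a * c * (y * z)) = ev 0 := by
    have e : 1 - a * c * (y * z) = 1 + (-(a * c * (y * z))) := by ring
    rw [e]
    apply v_one_add
    rw [v.map_neg]
    exact v_ac_mul_le hao hc hy hz
  have hN0 : (1 : F) - a * c * (y * z) ≠ 0 := v_ne_zero hNv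
  have hwle : v ((y + z - b * (y * z)) / (1 - a * c * (y * z))) ≤ ev 1 := by
    rw [v_div_unit v hNv]
    exact v_sub_le (v_add_le hy hz) (vmul_le' v hbo (vmul_le' v hy hz (le_refl 2))
      (by norm_num))
  rw [← hΩmul _ _ (t1_mem hao hbo hc hy) (t1_mem hao hbo hc hz), tmul]
  have e1 : (1 : F) * 1 - a * c * (y * z) = 1 - a * c * (y * z) := by ring
  have e2 : (1 : F) * z + 1 * y - b * (y * z) =
      (1 - a * c * (y * z)) * ((y + z - b * (y * z)) / (1 - a * c * (y * z))) := by
    rw [← mul_div_assoc, mul_div_cancel_left₀ _ hN0]; ring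
  rw [e1, e2]
  exact omega_scalar_mul hao hbo hc hΩmul hunit hNv hwle

include hao hbo hc hΩmul hΩne hcond hunit hC in
lemma phi_congr {y w : F} (hy : v y ≤ ev 1) (hw : v w ≤ ev 1)
    (hyw : v (y - w) ≤ ev (C : ℤ)) :
    Ω (tmat a b c 1 y) = Ω (tmat a b c 1 w) := by
  have hvD : v (1 - b * w + a * c * w ^ 2) = ev 0 := v_det_one hao hbo hc hw
  have hdX : (1 - b * w) ^ 2 - b * (1 - b * w) * (-w) + a * c * (-w) ^ 2
      = 1 - b * w + a * c * w ^ 2 := by ring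
  have hdet0 : (1 - b * w) ^ 2 - b * (1 - b * w) * (-w) + a * c * (-w) ^ 2 ≠ 0 := by
    rw [hdX]; exact v_ne_zero hvD
  have hXT : tmat a b c (1 - b * w) (-w) ∈ TSet a b c := mem_TSet a b c hdet0
  have hNv : v (1 - b * w + a * c * (y * w)) = ev 0 := by
    have e : 1 - b * w + a * c * (y * w) = 1 + (-(b * w) + a * c * (y * w)) := by ring
    rw [e]
    apply v_one_add
    exact v_add_le (by rw [v.map_neg]; exact v_b_mul_le hbo hw) (v_ac_mul_le hao hc hy hw)
  have hN0 : (1 : F) - b * w + a * c * (y * w) ≠ 0 := v_ne_zero hNv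
  have h1 : Ω (tmat a b c 1 y) * Ω (tmat a b c (1 - b * w) (-w)) = 1 := by
    rw [← hΩmul _ _ (t1_mem hao hbo hc hy) hXT, tmul]
    have e1 : (1 : F) * (1 - b * w) - a * c * (y * -w) = 1 - b * w + a * c * (y * w) := by
      ring
    have e2 : (1 : F) * -w + (1 - b * w) * y - b * (y * -w)
        = (1 - b * w + a * c * (y * w)) * ((y - w) / (1 - b * w + a * c * (y * w))) := by
      rw [← mul_div_assoc, mul_div_cancel_left₀ _ hN0]; ring
    rw [e1, e2, omega_scalar_mul hao hbo hc hΩmul hunit hNv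
      (by rw [v_div_unit v hNv]
          exact hyw.trans (ev_le_ev.mpr (by exact_mod_cast hC)))]
    exact omega_Uc hao hbo hc hcond hC (by rw [v_div_unit v hNv]; exact hyw)
  have h2 : Ω (tmat a b c 1 w) * Ω (tmat a b c (1 - b * w) (-w)) = 1 := by
    rw [← hΩmul _ _ (t1_mem hao hbo hc hw) hXT, tmul]
    have e1 : (1 : F) * (1 - b * w) - a * c * (w * -w) = 1 - b * w + a * c * w ^ 2 := by
      ring
    have e2 : (1 : F) * -w + (1 - b * w) * w - b * (w * -w) = (0 : F) := by ring
    rw [e1, e2, tscalar, hunit _ hvD]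
  exact mul_right_cancel₀ (hΩne _ hXT) (h1.trans h2.symm)

end OmegaLemmas

end Main

end S17

/-- the Möbius-type map implementing multiplication by `t(1,z)` on the `y`-coordinate -/
def fzf (a b c z r : F) : F := (r + z - b * (r * z)) / (1 - a * c * (r * z))

namespace S17

lemma ev_pow (n : ℕ) : (ev 1) ^ n = ev (n : ℤ) := by
  rw [ev, ev, ← WithZero.coe_pow]
  congr 1
  rw [← ofAdd_nsmul]
  congr 1
  simp

section Main2

variable {v : Valuation F Zm0} {a b c : F} {Ω : Matrix (Fin 2) (Fin 2) F → ℂ} {C : ℕ}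
variable (hao : v a ≤ ev 0) (hbo : v b ≤ ev 0) (hc : v c = ev 0)
variable (hΩmul : ∀ s t, s ∈ TSet a b c → t ∈ TSet a b c → Ω (s * t) = Ω s * Ω t)
variable (hΩne : ∀ t ∈ TSet a b c, Ω t ≠ 0)
variable (hcond : ∀ t, Umem v a b c C t → Ω t = 1)
variable (hunit : ∀ u : F, v u = ev 0 → Ω (u • (1 : Matrix (Fin 2) (Fin 2) F)) = 1)
variable (hC : 1 ≤ C)

include hao hc in
lemma v_one_sub_ac {y z : F} (hy : v y ≤ ev 1) (hz : v z ≤ ev 1) :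
    v (1 - a * c * (y * z)) = ev 0 := by
  have e : 1 - a * c * (y * z) = 1 + (-(a * c * (y * z))) := by ring
  rw [e]
  exact v_one_add v (by rw [v.map_neg]; exact v_ac_mul_le hao hc hy hz)

include hao hbo hc in
lemma vfz_sub {z y y' : F} (hz : v z ≤ ev 1) (hy : v y ≤ ev 1) (hy' : v y' ≤ ev 1) :
    v (fzf a b c z y - fzf a b c z y') = v (y - y') := by
  have hN := v_one_sub_ac hao hc hy hz
  have hN' := v_one_sub_ac hao hc hy' hz
  have hN0 : (1 : F) - a * c * (y * z) ≠ 0 := v_ne_zero hN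
  have hN0' : (1 : F) - a * c * (y' * z) ≠ 0 := v_ne_zero hN'
  have key : fzf a b c z y - fzf a b c z y'
      = ((y - y') * (1 - b * z + a * c * z ^ 2))
          / ((1 - a * c * (y * z)) * (1 - a * c * (y' * z))) := by
    rw [fzf, fzf]
    rw [div_sub_div _ _ hN0 hN0']; congr 1; ring
  rw [key, v_div_unit v (by rw [v.map_mul, hN, hN', ev_zero, one_mul]), v.map_mul,
    v_det_one hao hbo hc hz, ev_zero, mul_one]

include hao hbo hc in
lemma vfz_self {z y : F} (hz : v z ≤ ev 1) (hy : v y ≤ ev 1) :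
    v (fzf a b c z y - y) = v z := by
  have hN := v_one_sub_ac hao hc hy hz
  have hN0 : (1 : F) - a * c * (y * z) ≠ 0 := v_ne_zero hN
  have key : fzf a b c z y - y
      = (z * (1 - b * y + a * c * y ^ 2)) / (1 - a * c * (y * z)) := by
    rw [fzf]
    rw [eq_div_iff hN0, sub_mul, div_mul_cancel₀ _ hN0]; ring
  rw [key, v_div_unit v hN, v.map_mul, v_det_one hao hbo hc hy, ev_zero, mul_one]

include hao hbo hc in
lemma vfz_le {z y : F} {m : ℤ} (hm : 0 ≤ m) (hz1 : v z ≤ ev 1) (hy1 : v y ≤ ev 1)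
    (hz : v z ≤ ev m) (hy : v y ≤ ev m) : v (fzf a b c z y) ≤ ev m := by
  rw [fzf, v_div_unit v (v_one_sub_ac hao hc hy1 hz1)]
  exact v_sub_le (v_add_le hy hz) (vmul_le' v hbo (vmul_le' v hy hz (le_refl _)) (by omega))

include hao hbo hc hΩmul hunit in
lemma phi_mul_fzf {y z : F} (hy : v y ≤ ev 1) (hz : v z ≤ ev 1) :
    Ω (tmat a b c 1 y) * Ω (tmat a b c 1 z) = Ω (tmat a b c 1 (fzf a b c z y)) :=
  phi_mul hao hbo hc hΩmul hunit hy hz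

include hao hbo hc hΩmul hunit in
lemma exists_z (hC2 : 2 ≤ C)
    (hnontriv : ∃ t, Umem v a b c (C - 1) t ∧ Ω t ≠ 1) :
    ∃ z : F, v z ≤ ev ((C : ℤ) - 1) ∧ Ω (tmat a b c 1 z) ≠ 1 := by
  obtain ⟨t, ⟨⟨x, y, hd0, rfl⟩, hU⟩, hne1⟩ := hnontriv
  rw [if_neg (by omega : ¬(C - 1 = 0))] at hU
  have h00 := hU 0 0
  have h01 := hU 0 1
  rw [tsub_one] at h00 h01
  simp only [Matrix.of_apply, Matrix.cons_val', Matrix.cons_val_zero, Matrix.empty_val',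
    Matrix.cons_val_fin_one, Matrix.cons_val_one, Matrix.head_cons] at h00 h01
  have hcast : ((C - 1 : ℕ) : ℤ) = (C : ℤ) - 1 := by omega
  rw [hcast] at h00 h01
  have hy : v y ≤ ev ((C : ℤ) - 1) := by
    have e : v (c * y) = v y := by rw [v.map_mul, hc, ev_zero, one_mul]
    rwa [e] at h01
  have hCle : ev ((C : ℤ) - 1) ≤ ev 1 := ev_le_ev.mpr (by omega)
  have hx : v x = ev 0 := by
    have e : x = 1 + (x - 1) := by ring
    rw [e]
    exact v_one_add v (h00.trans hCle)
  have hx0 : x ≠ 0 := v_ne_zero hx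
  refine ⟨y / x, by rw [v_div_unit v hx]; exact hy, ?_⟩
  have e3 : x * (y / x) = y := by field_simp
  have e2 : tmat a b c x y = tmat a b c x (x * (y / x)) := by rw [e3]
  rw [e2, omega_scalar_mul hao hbo hc hΩmul hunit hx
    (by rw [v_div_unit v hx]; exact hy.trans hCle)] at hne1
  exact hne1

include hao hbo hc hΩmul hΩne hcond hunit hC in
lemma sum_zero (W : Finset F) (z : F) (hz1 : v z ≤ ev 1)
    (hφz : Ω (tmat a b c 1 z) ≠ 1)
    (hW1 : ∀ r ∈ W, v r ≤ ev 1)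
    (hsep : ∀ r ∈ W, ∀ s ∈ W, v (r - s) ≤ ev (C : ℤ) → r = s)
    (hclose : ∀ r ∈ W, ∃ s ∈ W, v (fzf a b c z r - s) ≤ ev (C : ℤ)) :
    ∑ r ∈ W, (Ω (tmat a b c 1 r))⁻¹ = 0 := by
  classical
  set S := ∑ r ∈ W, (Ω (tmat a b c 1 r))⁻¹ with hS
  set g : F → F := fun r =>
    if h : ∃ s ∈ W, v (fzf a b c z r - s) ≤ ev (C : ℤ) then h.choose else r with hgdef
  have hg : ∀ r ∈ W, g r ∈ W ∧ v (fzf a b c z r - g r) ≤ ev (C : ℤ) := by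
    intro r hr
    have h := hclose r hr
    rw [hgdef]
    simp only [dif_pos h]
    exact ⟨h.choose_spec.1, h.choose_spec.2⟩
  have hginj : ∀ r ∈ W, ∀ s ∈ W, g r = g s → r = s := by
    intro r hr s hs he
    apply hsep r hr s hs
    have h1 := (hg r hr).2
    have h2 := (hg s hs).2
    rw [he] at h1
    have h3 : v (fzf a b c z r - fzf a b c z s) ≤ ev (C : ℤ) := by
      have e : fzf a b c z r - fzf a b c z s
          = (fzf a b c z r - g s) - (fzf a b c z s - g s) := by ring
      rw [e]
      exact v_sub_le h1 h2
    rwa [vfz_sub hao hbo hc hz1 (hW1 r hr) (hW1 s hs)] at h3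
  have himg : W.image g = W := by
    apply Finset.eq_of_subset_of_card_le
    · intro x hx
      obtain ⟨r, hr, rfl⟩ := Finset.mem_image.mp hx
      exact (hg r hr).1
    · rw [Finset.card_image_of_injOn (fun r hr s hs => hginj r hr s hs)]
  have key : ∀ r ∈ W,
      (Ω (tmat a b c 1 (g r)))⁻¹ = (Ω (tmat a b c 1 r))⁻¹ * (Ω (tmat a b c 1 z))⁻¹ := by
    intro r hr
    have hfz1 : v (fzf a b c z r) ≤ ev 1 :=
      vfz_le hao hbo hc (by norm_num) hz1 (hW1 r hr) hz1 (hW1 r hr)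
    have h1 : Ω (tmat a b c 1 (fzf a b c z r)) = Ω (tmat a b c 1 (g r)) :=
      phi_congr hao hbo hc hΩmul hΩne hcond hunit hC hfz1 (hW1 _ (hg r hr).1) (hg r hr).2
    rw [← h1, ← phi_mul_fzf hao hbo hc hΩmul hunit (hW1 r hr) hz1, mul_inv]
  have hstep : S = S * (Ω (tmat a b c 1 z))⁻¹ := by
    conv_lhs => rw [hS, ← himg]
    rw [Finset.sum_image (fun r hr s hs => hginj r hr s hs), Finset.sum_congr rfl key,
      ← Finset.sum_mul]
  have hz0 : Ω (tmat a b c 1 z) ≠ 0 := hΩne _ (t1_mem hao hbo hc hz1)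
  have hinv : (Ω (tmat a b c 1 z))⁻¹ ≠ 1 := fun h => hφz (inv_eq_one.mp h)
  by_contra hS0
  exact hinv (mul_left_cancel₀ hS0 (by rw [← hstep, mul_one])).symm

end Main2

end S17


/-- character sums S_k = Σ Ω(t(1,y))⁻¹ over representatives of the classes
{ y ∈ 𝔬/𝔭^C : v(y) = k }, for a character Ω of T(F) of conductor exponent C ≥ 1 which is
trivial on 𝔬^×·1.  Also Ω(t(1,y)) only depends on y mod 𝔭^C. -/
theorem stmt17
    (v : Valuation F Zm0) (ϖ : F) (hϖ : v ϖ = ev 1)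
    (a b c : F)
    (hao : v a ≤ ev 0) (hbo : v b ≤ ev 0) (hc : v c = ev 0)
    (hd0 : b ^ 2 - 4 * (a * c) ≠ 0)
    (C : ℕ) (hC : 1 ≤ C)
    (Ω : Matrix (Fin 2) (Fin 2) F → ℂ)
    (hΩmul : ∀ s t, s ∈ TSet a b c → t ∈ TSet a b c → Ω (s * t) = Ω s * Ω t)
    (hΩne : ∀ t ∈ TSet a b c, Ω t ≠ 0)
    -- Ω has conductor exponent C: trivial on U_C, nontrivial on U_{C−1} :
    (hcond : ∀ t, Umem v a b c C t → Ω t = 1)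
    (hnontriv : ∃ t, Umem v a b c (C - 1) t ∧ Ω t ≠ 1)
    -- Ω(u·1) = 1 for u ∈ 𝔬^× :
    (hunit : ∀ u : F, v u = ev 0 → Ω (u • (1 : Matrix (Fin 2) (Fin 2) F)) = 1) :
    ∀ k : ℕ, 0 < k → k ≤ C →
      -- Ω(t(1,y)) depends only on the class of y mod 𝔭^C, for y of valuation k :
      ((∀ y y' : F, v y = ev k → v y' = ev k → v (y - y') ≤ ev C →
          Ω (tmat a b c 1 y) = Ω (tmat a b c 1 y'))
      -- the sums S_k over any set of representatives of { y ∈ 𝔬/𝔭^C : v(y) = k } :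
      ∧ (∀ Y : Finset F, (∀ y ∈ Y, v y = ev k) →
          (∀ y : F, v y = ev k → ∃! r, r ∈ Y ∧ v (y - r) ≤ ev C) →
          ((k < C - 1 → (∑ y ∈ Y, (Ω (tmat a b c 1 y))⁻¹) = 0)
            ∧ (k = C - 1 → 1 < C → (∑ y ∈ Y, (Ω (tmat a b c 1 y))⁻¹) = -1)
            ∧ (k = C → (∑ y ∈ Y, (Ω (tmat a b c 1 y))⁻¹) = 1)))) := by
  classical
  intro k hk hkC
  have hk1 : ev (k : ℤ) ≤ ev 1 := S17.ev_le_ev.mpr (by exact_mod_cast hk)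
  constructor
  · intro y y' hy hy' hyy'
    exact S17.phi_congr hao hbo hc hΩmul hΩne hcond hunit hC (hy.le.trans hk1)
      (hy'.le.trans hk1) hyy'
  · intro Y hYk hrep
    have hsepY : ∀ r ∈ Y, ∀ s ∈ Y, v (r - s) ≤ ev (C : ℤ) → r = s := by
      intro r hr s hs hrs
      obtain ⟨ρ, hρ, hu⟩ := hrep r (hYk r hr)
      have e1 : r = ρ := hu r ⟨hr, by rw [sub_self, v.map_zero]; exact zero_le'⟩
      have e2 : s = ρ := hu s ⟨hs, hrs⟩
      rw [e1, e2]
    refine ⟨?_, ?_, ?_⟩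
    · -- k < C - 1
      intro hlt
      have hC3 : 2 ≤ C := by omega
      obtain ⟨z, hzle, hzne⟩ := S17.exists_z hao hbo hc hΩmul hunit hC3 hnontriv
      have hz1 : v z ≤ ev 1 := hzle.trans (S17.ev_le_ev.mpr (by omega))
      apply S17.sum_zero hao hbo hc hΩmul hΩne hcond hunit hC Y z hz1 hzne
      · intro r hr
        rw [hYk r hr]
        exact hk1
      · exact hsepY
      · intro r hr
        have hvr := hYk r hr
        have hvr1 : v r ≤ ev 1 := hvr.le.trans hk1
        have hfz : v (fzf a b c z r - r) = v z := S17.vfz_self hao hbo hc hz1 hvr1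
        have hlt2 : v (fzf a b c z r - r) < ev (k : ℤ) := by
          rw [hfz]
          exact lt_of_le_of_lt hzle (S17.ev_lt_ev.mpr (by omega))
        have hvfz : v (fzf a b c z r) = ev (k : ℤ) := by
          have e : fzf a b c z r = r + (fzf a b c z r - r) := by ring
          rw [e, S17.v_add_eq_left v (by rw [hvr]; exact hlt2), hvr]
        obtain ⟨s, ⟨hsY, hss⟩, _⟩ := hrep (fzf a b c z r) hvfz
        exact ⟨s, hsY, hss⟩
    · -- k = C - 1, 1 < C
      intro hkeq hC1
      have hC3 : 2 ≤ C := hC1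
      have hkC1 : (k : ℤ) = (C : ℤ) - 1 := by omega
      obtain ⟨z, hzle, hzne⟩ := S17.exists_z hao hbo hc hΩmul hunit hC3 hnontriv
      have hz1 : v z ≤ ev 1 := hzle.trans (S17.ev_le_ev.mpr (by omega))
      have h0Y : (0 : F) ∉ Y := by
        intro h0
        have := hYk 0 h0
        rw [v.map_zero] at this
        exact S17.ev_ne_zero _ this.symm
      have hsum0 : ∑ r ∈ insert (0 : F) Y, (Ω (tmat a b c 1 r))⁻¹ = 0 := by
        apply S17.sum_zero hao hbo hc hΩmul hΩne hcond hunit hC (insert (0 : F) Y) z hz1 hzne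
        · intro r hr
          rcases Finset.mem_insert.mp hr with rfl | hr
          · rw [v.map_zero]; exact zero_le'
          · rw [hYk r hr]; exact hk1
        · intro r hr s hs hrs
          rcases Finset.mem_insert.mp hr with rfl | hr <;>
            rcases Finset.mem_insert.mp hs with rfl | hs
          · rfl
          · exfalso
            rw [zero_sub, v.map_neg, hYk s hs] at hrs
            have := S17.ev_le_ev.mp hrs
            omega
          · exfalso
            rw [sub_zero, hYk r hr] at hrs
            have := S17.ev_le_ev.mp hrs
            omega
          · exact hsepY r hr s hs hrs
        · intro r hr
          have hvrle : v r ≤ ev ((C : ℤ) - 1) := by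
            rcases Finset.mem_insert.mp hr with rfl | hr
            · rw [v.map_zero]; exact zero_le'
            · rw [hYk r hr, ← hkC1]
          have hvr1 : v r ≤ ev 1 := hvrle.trans (S17.ev_le_ev.mpr (by omega))
          have hzleC : v z ≤ ev ((C : ℤ) - 1) := hzle
          have hfle : v (fzf a b c z r) ≤ ev ((C : ℤ) - 1) :=
            S17.vfz_le hao hbo hc (by omega) hz1 hvr1 hzleC hvrle
          rcases eq_or_ne (v (fzf a b c z r)) (ev ((C : ℤ) - 1)) with he | hne
          · have he' : v (fzf a b c z r) = ev (k : ℤ) := by rw [he, ← hkC1]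
            obtain ⟨s, ⟨hsY, hss⟩, _⟩ := hrep (fzf a b c z r) he'
            exact ⟨s, Finset.mem_insert_of_mem hsY, hss⟩
          · have h2 := S17.zm0_discrete hfle hne
            refine ⟨0, Finset.mem_insert_self _ _, ?_⟩
            rw [sub_zero]
            rwa [show (C : ℤ) - 1 + 1 = (C : ℤ) by ring] at h2
      rw [Finset.sum_insert h0Y] at hsum0
      have hφ0 : Ω (tmat a b c 1 (0 : F)) = 1 :=
        S17.omega_Uc hao hbo hc hcond hC (by rw [v.map_zero]; exact zero_le')
      rw [hφ0, inv_one] at hsum0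
      linear_combination hsum0
    · -- k = C
      intro hkeq
      have hall1 : ∀ r ∈ Y, (Ω (tmat a b c 1 r))⁻¹ = 1 := by
        intro r hr
        rw [S17.omega_Uc hao hbo hc hcond hC
          (by rw [hYk r hr]; exact S17.ev_le_ev.mpr (by omega)), inv_one]
      have hωC : v (ϖ ^ C) = ev (k : ℤ) := by
        rw [v.map_pow, hϖ, S17.ev_pow]
        congr 1
        omega
      obtain ⟨r, ⟨hrY, _⟩, hu⟩ := hrep (ϖ ^ C) hωC
      have hYr : Y = {r} := by
        apply Finset.eq_singleton_iff_unique_mem.mpr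
        refine ⟨hrY, ?_⟩
        intro s hs
        apply hu s ⟨hs, ?_⟩
        apply S17.v_sub_le
        · rw [v.map_pow, hϖ, S17.ev_pow]
        · rw [hYk s hs]
          exact S17.ev_le_ev.mpr (by omega)
      rw [hYr, Finset.sum_singleton, hall1 r hrY]
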